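/- arXiv:2106.09410 — 3 statements merged into one kernel-verified Lean document; each statement's English description precedes it below -/
import Mathlib

section
/- Let S be a real symmetric m×m matrix with spectral radius ρ, let v ∈ ℝ^m be nonzero, and for C > 0 let x*(C) be any maximizer of V(x) = x^T S x + v^T x over { x : x^T x ≤ C } with x*(C) ≠ 0. If C < (ε‖v‖/(2ρ))², with 0 < ε, then the cosine of the angle between x*(C) and v satisfies v^T x*(C) / (‖v‖·‖x*(C)‖) > 1 − ε. In particular, lim_{C→0⁺} ‖proj_v x*(C)‖ / ‖x*(C)‖ = 1. -/
open Matrix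

private lemma quad_bound {m : ℕ} (S : Matrix (Fin m) (Fin m) ℝ) (hS : S.IsHermitian)
    (ρ : ℝ) (hρ : IsGreatest (Set.range fun i => |hS.eigenvalues i|) ρ)
    (y : Fin m → ℝ) : |y ⬝ᵥ S.mulVec y| ≤ ρ * (y ⬝ᵥ y) := by
  set U : Matrix (Fin m) (Fin m) ℝ := (hS.eigenvectorUnitary : Matrix (Fin m) (Fin m) ℝ) with hUdef
  set c : Fin m → ℝ := (star U) *ᵥ y with hc
  have hUsU : U * star U = 1 := Unitary.coe_mul_star_self hS.eigenvectorUnitary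
  have hstar : star U = Uᵀ := by
    rw [Matrix.star_eq_conjTranspose, conjTranspose]
    ext i j; simp
  have h1 : y ⬝ᵥ S.mulVec y = ∑ i, hS.eigenvalues i * (c i)^2 := by
    conv_lhs => rw [hS.spectral_theorem]
    rw [Unitary.conjStarAlgAut_apply, ← hUdef]
    rw [← mulVec_mulVec, ← mulVec_mulVec, dotProduct_mulVec, ← mulVec_transpose, ← hstar, ← hc]
    simp only [dotProduct, mulVec_diagonal, Function.comp_apply, RCLike.ofReal_real_eq_id, id]
    exact Finset.sum_congr rfl fun i _ => by ring
  have h2 : y ⬝ᵥ y = ∑ i, (c i)^2 := by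
    calc y ⬝ᵥ y = y ⬝ᵥ ((U * star U) *ᵥ y) := by rw [hUsU, one_mulVec]
    _ = c ⬝ᵥ c := by rw [← mulVec_mulVec, dotProduct_mulVec, ← mulVec_transpose, ← hstar, ← hc]
    _ = ∑ i, (c i)^2 := by simp [dotProduct, sq]
  rw [h1, h2, Finset.mul_sum]
  refine (Finset.abs_sum_le_sum_abs _ _).trans (Finset.sum_le_sum fun i _ => ?_)
  rw [abs_mul, abs_of_nonneg (sq_nonneg (c i))]
  exact mul_le_mul_of_nonneg_right (hρ.2 ⟨i, rfl⟩) (sq_nonneg _)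

/-- For small budgets the maximizer `x*(C)` aligns with `v`: if
`C < (ε‖v‖/(2ρ))²` then the cosine between `x*(C)` and `v` exceeds `1 − ε`, and
`‖proj_v x*(C)‖/‖x*(C)‖ → 1` as `C → 0⁺`. -/
theorem stmt_5 {m : ℕ} (S : Matrix (Fin m) (Fin m) ℝ) (hS : S.IsHermitian)
    (ρ : ℝ) (hρ : IsGreatest (Set.range fun i => |hS.eigenvalues i|) ρ)
    (v : Fin m → ℝ) (hv : v ≠ 0)
    (xstar : ℝ → Fin m → ℝ)
    (hmax : ∀ C > 0, (xstar C) ⬝ᵥ (xstar C) ≤ C ∧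
      ∀ y : Fin m → ℝ, y ⬝ᵥ y ≤ C →
        y ⬝ᵥ S.mulVec y + v ⬝ᵥ y ≤
          (xstar C) ⬝ᵥ S.mulVec (xstar C) + v ⬝ᵥ (xstar C))
    (hne : ∀ C > 0, xstar C ≠ 0) :
    (∀ ε > 0, ∀ C, 0 < C → C < (ε * Real.sqrt (v ⬝ᵥ v) / (2 * ρ)) ^ 2 →
      1 - ε < v ⬝ᵥ xstar C /
        (Real.sqrt (v ⬝ᵥ v) * Real.sqrt ((xstar C) ⬝ᵥ (xstar C)))) ∧
    Filter.Tendsto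
      (fun C => |v ⬝ᵥ xstar C| /
        (Real.sqrt (v ⬝ᵥ v) * Real.sqrt ((xstar C) ⬝ᵥ (xstar C))))
      (nhdsWithin 0 (Set.Ioi 0)) (nhds 1) := by
  have key := quad_bound S hS ρ hρ
  have hρ0 : 0 ≤ ρ := by
    obtain ⟨i, hi⟩ := hρ.1
    simp [← hi, abs_nonneg]
  have hvv : 0 < v ⬝ᵥ v := by
    rcases lt_or_eq_of_le (Finset.sum_nonneg fun i _ => mul_self_nonneg (v i)) with h | h
    · exact h
    · exact absurd (dotProduct_self_eq_zero.mp h.symm) hv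
  set nv : ℝ := Real.sqrt (v ⬝ᵥ v) with hnv
  have hnv0 : 0 < nv := Real.sqrt_pos.mpr hvv
  have hnvsq : nv ^ 2 = v ⬝ᵥ v := Real.sq_sqrt hvv.le
  -- core inequality
  have core : ∀ C, 0 < C →
      1 - 2 * ρ * Real.sqrt C / nv ≤
        v ⬝ᵥ xstar C / (nv * Real.sqrt ((xstar C) ⬝ᵥ (xstar C))) := by
    intro C hC
    obtain ⟨hbud, hopt⟩ := hmax C hC
    set x := xstar C with hx
    have hxx : 0 < x ⬝ᵥ x := by
      rcases lt_or_eq_of_le (Finset.sum_nonneg fun i _ => mul_self_nonneg (x i)) with h | h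
      · exact h
      · exact absurd (dotProduct_self_eq_zero.mp h.symm) (hne C hC)
    set n : ℝ := Real.sqrt (x ⬝ᵥ x) with hn
    have hn0 : 0 < n := Real.sqrt_pos.mpr hxx
    have hnsq : n ^ 2 = x ⬝ᵥ x := Real.sq_sqrt hxx.le
    set y : Fin m → ℝ := (n / nv) • v with hy
    have hyy : y ⬝ᵥ y = n ^ 2 := by
      rw [hy, smul_dotProduct, dotProduct_smul, smul_eq_mul, smul_eq_mul, ← hnvsq]
      field_simp
    have hvy : v ⬝ᵥ y = n * nv := by
      rw [hy, dotProduct_smul, smul_eq_mul, ← hnvsq]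
      field_simp
    have hopt' := hopt y (by rw [hyy, hnsq]; exact hbud)
    have hkx := abs_le.mp (key x)
    have hky := abs_le.mp (key y)
    have hlow : n * nv - 2 * ρ * n ^ 2 ≤ v ⬝ᵥ x := by
      rw [hvy] at hopt'
      rw [hyy] at hky
      rw [← hnsq] at hkx
      linarith [hky.1, hkx.2]
    have heq : (n * nv - 2 * ρ * n ^ 2) / (nv * n) = 1 - 2 * ρ * n / nv := by
      field_simp
    have hnC : n ≤ Real.sqrt C := Real.sqrt_le_sqrt hbud
    calc 1 - 2 * ρ * Real.sqrt C / nv ≤ 1 - 2 * ρ * n / nv := by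
          have h1 : 2 * ρ * n ≤ 2 * ρ * Real.sqrt C :=
            mul_le_mul_of_nonneg_left hnC (by linarith)
          have h2 : 2 * ρ * n / nv ≤ 2 * ρ * Real.sqrt C / nv := by gcongr
          linarith
      _ = (n * nv - 2 * ρ * n ^ 2) / (nv * n) := heq.symm
      _ ≤ v ⬝ᵥ x / (nv * n) := by gcongr
  have hxxpos : ∀ C, 0 < C → 0 < Real.sqrt ((xstar C) ⬝ᵥ (xstar C)) := by
    intro C hC
    apply Real.sqrt_pos.mpr
    rcases lt_or_eq_of_le (Finset.sum_nonneg fun i _ => mul_self_nonneg (xstar C i)) with h | h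
    · exact h
    · exact absurd (dotProduct_self_eq_zero.mp h.symm) (hne C hC)
  have cs : ∀ C, 0 < C →
      |v ⬝ᵥ xstar C| ≤ nv * Real.sqrt ((xstar C) ⬝ᵥ (xstar C)) := by
    intro C hC
    have h' : (v ⬝ᵥ xstar C) ^ 2 ≤ (v ⬝ᵥ v) * ((xstar C) ⬝ᵥ (xstar C)) := by
      simpa [dotProduct, sq] using
        Finset.sum_mul_sq_le_sq_mul_sq Finset.univ v (xstar C)
    calc |v ⬝ᵥ xstar C| = Real.sqrt ((v ⬝ᵥ xstar C) ^ 2) := (Real.sqrt_sq_eq_abs _).symm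
      _ ≤ Real.sqrt ((v ⬝ᵥ v) * ((xstar C) ⬝ᵥ (xstar C))) := Real.sqrt_le_sqrt h'
      _ = nv * Real.sqrt ((xstar C) ⬝ᵥ (xstar C)) := Real.sqrt_mul hvv.le _
  constructor
  · intro ε hε C hC hC2
    rcases eq_or_lt_of_le hρ0 with hρz | hρpos
    · rw [← hρz] at hC2; norm_num at hC2; linarith
    · have ht : 0 < ε * nv / (2 * ρ) := by positivity
      have hsC : Real.sqrt C < ε * nv / (2 * ρ) := by
        have := Real.sqrt_lt_sqrt hC.le hC2
        rwa [Real.sqrt_sq ht.le] at this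
      have h1 : Real.sqrt C * (2 * ρ) < ε * nv := (lt_div_iff₀ (by positivity)).mp hsC
      have h2 : 2 * ρ * Real.sqrt C / nv < ε := by
        rw [div_lt_iff₀ hnv0]; linarith
      linarith [core C hC]
  · have hg : Filter.Tendsto (fun C : ℝ => 1 - 2 * ρ * Real.sqrt C / nv)
        (nhdsWithin 0 (Set.Ioi 0)) (nhds 1) := by
      have hcont : Continuous fun C : ℝ => 1 - 2 * ρ * Real.sqrt C / nv := by fun_prop
      have h := hcont.tendsto 0
      simp only [Real.sqrt_zero, mul_zero, zero_div, sub_zero] at h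
      exact h.mono_left nhdsWithin_le_nhds
    refine tendsto_of_tendsto_of_tendsto_of_le_of_le' hg tendsto_const_nhds ?_ ?_
    · filter_upwards [self_mem_nhdsWithin] with C hC
      have hC : (0:ℝ) < C := hC
      calc 1 - 2 * ρ * Real.sqrt C / nv
          ≤ v ⬝ᵥ xstar C / (nv * Real.sqrt ((xstar C) ⬝ᵥ (xstar C))) := core C hC
        _ ≤ |v ⬝ᵥ xstar C| / (nv * Real.sqrt ((xstar C) ⬝ᵥ (xstar C))) := by
            have := hxxpos C hC
            gcongr
            exact le_abs_self _
    · filter_upwards [self_mem_nhdsWithin] with C hC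
      have hC : (0:ℝ) < C := hC
      exact (div_le_one (mul_pos hnv0 (hxxpos C hC))).mpr (cs C hC)
end

section
/- Let P be the kn×kn matrix P = ((1−β)/2)·I_k ⊗ M₋² + (1/(2k))·J_k ⊗ ((1+(k−1)β)M₊² − (1−β)M₋²), where M₊ = ((1+(k−1)β)I_n − δG)^{-1} and M₋ = ((1−β)I_n − δG)^{-1}, G real symmetric with eigenvalues μ_1,…,μ_n, and assume 1+(k−1)β − δμ_i > 0 and 1−β − δμ_i > 0 for all i. Then the eigenvalues of P are exactly: (1+(k−1)β)/(2(1+(k−1)β−δμ_i)²) (each with the multiplicity of μ_i), and (1−β)/(2(1−β−δμ_i)²) (each with multiplicity (k−1) times that of μ_i), for i = 1,…,n. -/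
open Matrix Polynomial Kronecker

section helpers
variable {m : Type*} [Fintype m] [DecidableEq m]

lemma my_charmatrix_diagonal (d : m → ℝ) :
    charmatrix (diagonal d) = diagonal (fun i => (X : ℝ[X]) - C (d i)) := by
  refine Matrix.ext fun i j => ?_
  by_cases h : i = j
  · subst h; rw [charmatrix_apply_eq]; simp
  · rw [charmatrix_apply_ne _ _ _ h, diagonal_apply_ne _ h]
    simp [diagonal_apply_ne _ h]

lemma my_charpoly_diagonal (d : m → ℝ) :
    (diagonal d).charpoly = ∏ i, ((X : ℝ[X]) - C (d i)) := by
  rw [Matrix.charpoly, my_charmatrix_diagonal, det_diagonal]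

lemma my_roots_charpoly_diagonal (d : m → ℝ) :
    (diagonal d).charpoly.roots = Multiset.map d Finset.univ.val := by
  rw [my_charpoly_diagonal, Finset.prod_eq_multiset_prod]
  have h2 : Multiset.map (fun i => (X : ℝ[X]) - C (d i)) Finset.univ.val
      = Multiset.map (fun a => (X : ℝ[X]) - C a) (Multiset.map d Finset.univ.val) := by
    rw [Multiset.map_map]; rfl
  rw [h2, Polynomial.roots_multiset_prod_X_sub_C]

lemma my_charpoly_conj (S T A : Matrix m m ℝ) (h : S * T = 1) :
    (S * A * T).charpoly = A.charpoly := by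
  have hone : (1 : Matrix m m ℝ).map (C : ℝ → ℝ[X]) = 1 :=
    Matrix.map_one _ (map_zero _) (map_one _)
  have key : charmatrix (S * A * T) = S.map C * charmatrix A * T.map C := by
    rw [Matrix.charmatrix, Matrix.charmatrix]
    simp only [RingHom.mapMatrix_apply]
    rw [Matrix.map_mul, Matrix.map_mul, Matrix.mul_sub, Matrix.sub_mul]
    congr 1
    · have hc := (scalar_commute (X : ℝ[X]) (fun r' => Commute.all _ _) (S.map C)).eq
      rw [← hc, Matrix.mul_assoc, ← Matrix.map_mul, h, hone, mul_one]
  have hd : (S.map (C : ℝ → ℝ[X])).det * (T.map C).det = 1 := by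
    rw [← det_mul, ← Matrix.map_mul, h, hone, det_one]
  rw [Matrix.charpoly, Matrix.charpoly, key, det_mul, det_mul, mul_right_comm, hd, one_mul]

end helpers

variable {m : Type*} [Fintype m] [DecidableEq m]

lemma my_herm_roots (A : Matrix m m ℝ) (hA : A.IsHermitian) :
    Multiset.map hA.eigenvalues Finset.univ.val = A.charpoly.roots := by
  have h1 : (hA.eigenvectorUnitary : Matrix m m ℝ) * star (hA.eigenvectorUnitary : Matrix m m ℝ)
      = 1 := (Matrix.mem_unitaryGroup_iff).mp (IsHermitian.eigenvectorUnitary hA).2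
  have hofReal : (RCLike.ofReal ∘ hA.eigenvalues : m → ℝ) = hA.eigenvalues := by
    funext i; simp [RCLike.ofReal]
  conv_rhs => rw [hA.spectral_theorem, Unitary.conjStarAlgAut_apply]
  rw [my_charpoly_conj _ _ _ h1, hofReal, my_roots_charpoly_diagonal]

lemma my_inv_sq (G : Matrix m m ℝ) (hG : G.IsHermitian) (α δ : ℝ)
    (hα : ∀ i, α - δ * hG.eigenvalues i ≠ 0) :
    ((α • (1 : Matrix m m ℝ) - δ • G)⁻¹) ^ 2 =
      (hG.eigenvectorUnitary : Matrix m m ℝ) *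
        diagonal (fun i => ((α - δ * hG.eigenvalues i) ^ 2)⁻¹) *
        star (hG.eigenvectorUnitary : Matrix m m ℝ) := by
  set V : Matrix m m ℝ := (hG.eigenvectorUnitary : Matrix m m ℝ) with hV
  set μ : m → ℝ := hG.eigenvalues with hμ
  have h1 : V * star V = 1 := (Matrix.mem_unitaryGroup_iff).mp (IsHermitian.eigenvectorUnitary hG).2
  have h2 : star V * V = 1 := (Matrix.mem_unitaryGroup_iff').mp (IsHermitian.eigenvectorUnitary hG).2
  have hofReal : (RCLike.ofReal ∘ μ : m → ℝ) = μ := by funext i; simp [RCLike.ofReal]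
  have hspec : G = V * diagonal μ * star V := by
    conv_lhs => rw [hG.spectral_theorem, Unitary.conjStarAlgAut_apply]
    rw [hofReal]
  have hbase : α • (1 : Matrix m m ℝ) - δ • G = V * diagonal (fun i => α - δ * μ i) * star V := by
    have : diagonal (fun i => α - δ * μ i) =
        α • (1 : Matrix m m ℝ) - δ • diagonal μ := by
      rw [← diagonal_one, ← diagonal_smul, ← diagonal_smul, ← diagonal_sub]
      ext i j
      by_cases h : i = j
      · subst h; simp
      · simp [diagonal_apply_ne _ h, Matrix.one_apply_ne h]
    rw [this, Matrix.mul_sub, Matrix.sub_mul, Matrix.mul_smul, Matrix.mul_smul,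
      Matrix.smul_mul, Matrix.smul_mul, Matrix.mul_one, h1, ← hspec]
  have hinv : (α • (1 : Matrix m m ℝ) - δ • G)⁻¹ =
      V * diagonal (fun i => (α - δ * μ i)⁻¹) * star V := by
    apply inv_eq_right_inv
    rw [hbase, Matrix.mul_assoc, Matrix.mul_assoc, ← Matrix.mul_assoc (star V),
      ← Matrix.mul_assoc (star V), h2, Matrix.one_mul, ← Matrix.mul_assoc,
      ← Matrix.mul_assoc, Matrix.mul_assoc V, diagonal_mul_diagonal]
    have : (fun i => (α - δ * μ i) * (α - δ * μ i)⁻¹) = fun _ => (1:ℝ) := by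
      funext i; exact mul_inv_cancel₀ (hα i)
    rw [this, diagonal_one, Matrix.mul_one, h1]
  rw [hinv, pow_two, Matrix.mul_assoc, Matrix.mul_assoc, ← Matrix.mul_assoc (star V),
    ← Matrix.mul_assoc (star V), h2, Matrix.one_mul, ← Matrix.mul_assoc,
    ← Matrix.mul_assoc, Matrix.mul_assoc V, diagonal_mul_diagonal]
  have hfun : (fun i => (α - δ * μ i)⁻¹ * (α - δ * μ i)⁻¹)
      = fun i => ((α - δ * μ i) ^ 2)⁻¹ := by
    funext i; rw [pow_two, mul_inv]
  rw [hfun]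



open Matrix Kronecker

/-- The multiset of eigenvalues of
`P = ((1−β)/2)·I_k ⊗ M₋² + (1/(2k))·J_k ⊗ ((1+(k−1)β)M₊² − (1−β)M₋²)` consists of
`(1+(k−1)β)/(2(1+(k−1)β−δμᵢ)²)` (with the multiplicity of `μᵢ`) and
`(1−β)/(2(1−β−δμᵢ)²)` (with multiplicity `k−1` times that of `μᵢ`). -/
theorem stmt_12 {n : ℕ} (k : ℕ) (hk : 2 ≤ k) (β δ : ℝ)
    (G : Matrix (Fin n) (Fin n) ℝ) (hG : G.IsHermitian)
    (hpos : ∀ i, 1 + ((k : ℝ) - 1) * β - δ * hG.eigenvalues i > 0 ∧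
      1 - β - δ * hG.eigenvalues i > 0)
    (P : Matrix (Fin k × Fin n) (Fin k × Fin n) ℝ)
    (hPdef : P =
      ((1 - β) / 2) • ((1 : Matrix (Fin k) (Fin k) ℝ) ⊗ₖ
        ((((1 - β) • (1 : Matrix (Fin n) (Fin n) ℝ) - δ • G)⁻¹) ^ 2)) +
      (1 / (2 * (k : ℝ))) • ((Matrix.of fun _ _ => (1 : ℝ) : Matrix (Fin k) (Fin k) ℝ) ⊗ₖ
        ((1 + ((k : ℝ) - 1) * β) •
            ((((1 + ((k : ℝ) - 1) * β) • (1 : Matrix (Fin n) (Fin n) ℝ) - δ • G)⁻¹) ^ 2) -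
          (1 - β) • ((((1 - β) • (1 : Matrix (Fin n) (Fin n) ℝ) - δ • G)⁻¹) ^ 2))))
    (hP : P.IsHermitian) :
    Multiset.map hP.eigenvalues Finset.univ.val =
      Multiset.map (fun i : Fin n =>
        (1 + ((k : ℝ) - 1) * β) /
          (2 * (1 + ((k : ℝ) - 1) * β - δ * hG.eigenvalues i) ^ 2)) Finset.univ.val +
      (k - 1) • Multiset.map (fun i : Fin n =>
        (1 - β) / (2 * (1 - β - δ * hG.eigenvalues i) ^ 2)) Finset.univ.val := by
  haveI : NeZero k := ⟨by omega⟩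
  have hk0 : (k : ℝ) ≠ 0 := Nat.cast_ne_zero.mpr (by omega)
  set μ : Fin n → ℝ := hG.eigenvalues with hμ
  set V : Matrix (Fin n) (Fin n) ℝ := (hG.eigenvectorUnitary : Matrix (Fin n) (Fin n) ℝ) with hVdef
  have hV1 : V * star V = 1 := (Matrix.mem_unitaryGroup_iff).mp (IsHermitian.eigenvectorUnitary hG).2
  -- the elementary k×k matrices
  set Jk : Matrix (Fin k) (Fin k) ℝ := Matrix.of fun _ _ => (1 : ℝ) with hJk
  set E : Matrix (Fin k) (Fin k) ℝ := Matrix.of fun j l => if j = 0 ∧ l = 0 then (1:ℝ) else 0 with hE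
  set c : Matrix (Fin k) (Fin k) ℝ := Matrix.of fun _ l => if l = 0 then (1:ℝ) else 0 with hc
  set r : Matrix (Fin k) (Fin k) ℝ := Matrix.of fun j _ => if j = 0 then (1:ℝ) else 0 with hr
  set S : Matrix (Fin k) (Fin k) ℝ := c + r - 1 with hS
  set T : Matrix (Fin k) (Fin k) ℝ := ((k:ℝ))⁻¹ • Jk - 1 + E with hT
  -- elementary product identities
  have hJJ : Jk * Jk = (k:ℝ) • Jk := by
    ext j l; simp [hJk, Matrix.mul_apply, Finset.sum_const, Finset.card_univ]
  have hEE : E * E = E := by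
    ext j l
    simp only [hE, Matrix.mul_apply, Matrix.of_apply, ite_and]
    by_cases h : j = 0 <;> simp [h, Finset.sum_ite_eq]
  have hJE : Jk * E = c := by
    ext j l
    simp only [hJk, hE, hc, Matrix.mul_apply, Matrix.of_apply, one_mul, ite_and]
    by_cases h : l = 0 <;> simp [h, Finset.sum_ite_eq]
  have hEJ : E * Jk = r := by
    ext j l
    simp only [hJk, hE, hr, Matrix.mul_apply, Matrix.of_apply, mul_one, ite_and]
    by_cases h : j = 0 <;> simp [h, Finset.sum_ite_eq]
  have hcJ : c * Jk = Jk := by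
    ext j l; simp [hc, hJk, Matrix.mul_apply, Finset.sum_ite_eq]
  have hJc : Jk * c = (k:ℝ) • c := by
    ext j l
    simp only [hc, hJk, Matrix.mul_apply, Matrix.of_apply, one_mul, Matrix.smul_apply, smul_eq_mul]
    by_cases h : l = 0 <;> simp [h, Finset.sum_const, Finset.card_univ]
  have hrJ : r * Jk = (k:ℝ) • r := by
    ext j l
    simp only [hr, hJk, Matrix.mul_apply, Matrix.of_apply, mul_one, Matrix.smul_apply, smul_eq_mul]
    by_cases h : j = 0 <;> simp [h, Finset.sum_const, Finset.card_univ]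
  have hJr : Jk * r = Jk := by
    ext j l; simp [hr, hJk, Matrix.mul_apply, Finset.sum_ite_eq]
  have hcE : c * E = c := by
    ext j l
    simp only [hc, hE, Matrix.mul_apply, Matrix.of_apply, ite_and]
    by_cases h : l = 0 <;> simp [h, Finset.sum_ite_eq]
  have hrE : r * E = E := by
    ext j l
    simp only [hr, hE, Matrix.mul_apply, Matrix.of_apply, ite_and]
    by_cases h : j = 0 <;> by_cases h' : l = 0 <;> simp [h, h', Finset.sum_ite_eq]
  have hEc : E * c = E := by
    ext j l
    simp only [hE, hc, Matrix.mul_apply, Matrix.of_apply, ite_and]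
    by_cases h : j = 0 <;> by_cases h' : l = 0 <;> simp [h, h', Finset.sum_ite_eq]
  have hEr : E * r = r := by
    ext j l
    simp only [hE, hr, Matrix.mul_apply, Matrix.of_apply, ite_and]
    by_cases h : j = 0 <;> simp [h, Finset.sum_ite_eq]
  have hcc : c * c = c := by
    ext j l
    simp only [hc, Matrix.mul_apply, Matrix.of_apply]
    by_cases h : l = 0 <;> simp [h, Finset.sum_ite_eq]
  have hrr : r * r = r := by
    ext j l
    simp only [hr, Matrix.mul_apply, Matrix.of_apply]
    by_cases h : j = 0 <;> simp [h, Finset.sum_ite_eq]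
  have hrc : r * c = r * c := rfl
  -- S * T = 1 and T * S = 1
  have hST : S * T = 1 := by
    rw [hS, hT]
    simp only [Matrix.add_mul, Matrix.sub_mul, Matrix.mul_add, Matrix.mul_sub,
      Matrix.smul_mul, Matrix.mul_smul, Matrix.one_mul, Matrix.mul_one,
      hcJ, hrJ, hcE, hrE, hJJ, hJE, hEJ, hEE, hJc, hJr, hEc, hEr, hcc, hrr]
    simp only [smul_smul, inv_mul_cancel₀ hk0, one_smul, smul_sub, smul_add]
    abel
  have hTS : T * S = 1 := by
    rw [hS, hT]
    simp only [Matrix.add_mul, Matrix.sub_mul, Matrix.mul_add, Matrix.mul_sub,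
      Matrix.smul_mul, Matrix.mul_smul, Matrix.one_mul, Matrix.mul_one,
      hcJ, hrJ, hcE, hrE, hJJ, hJE, hEJ, hEE, hJc, hJr, hEc, hEr, hcc, hrr]
    simp only [smul_smul, inv_mul_cancel₀ hk0, one_smul, smul_sub, smul_add]
    abel
  -- J = S * Dk * T with Dk = k • E = diagonal dk
  have hDk : Matrix.diagonal (fun j : Fin k => if j = 0 then (k:ℝ) else 0) = (k:ℝ) • E := by
    ext j l
    by_cases h : j = l
    · subst h; by_cases h0 : j = 0 <;> simp [hE, h0]
    · have hcond : ¬(j = 0 ∧ l = 0) := fun hh => h (hh.1.trans hh.2.symm)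
      simp [Matrix.diagonal_apply_ne _ h, hE, hcond]
  have hJdiag : S * Matrix.diagonal (fun j : Fin k => if j = 0 then (k:ℝ) else 0) * T = Jk := by
    rw [hDk, Matrix.mul_smul, Matrix.smul_mul]
    have hSE : S * E = c := by
      rw [hS, Matrix.sub_mul, Matrix.add_mul, hcE, hrE, Matrix.one_mul]; abel
    rw [hSE]
    have hcT : c * T = (k:ℝ)⁻¹ • Jk := by
      rw [hT, Matrix.mul_add, Matrix.mul_sub, Matrix.mul_smul, hcJ, hcE, Matrix.mul_one]; abel
    rw [hcT, smul_smul, mul_inv_cancel₀ hk0, one_smul]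
  -- diagonalize the n×n pieces
  set lp : Fin n → ℝ := fun i => ((1 + ((k:ℝ) - 1) * β - δ * μ i) ^ 2)⁻¹ with hlp
  set lm : Fin n → ℝ := fun i => ((1 - β - δ * μ i) ^ 2)⁻¹ with hlm
  have hnep : ∀ i, 1 + ((k:ℝ) - 1) * β - δ * μ i ≠ 0 := fun i => ne_of_gt (hpos i).1
  have hnem : ∀ i, 1 - β - δ * μ i ≠ 0 := fun i => ne_of_gt (hpos i).2
  have hMp : (((1 + ((k:ℝ) - 1) * β) • (1 : Matrix (Fin n) (Fin n) ℝ) - δ • G)⁻¹) ^ 2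
      = V * Matrix.diagonal lp * star V := by
    have := my_inv_sq G hG (1 + ((k:ℝ) - 1) * β) δ (fun i => by
      have := hnep i; linarith [(hpos i).1])
    rw [this]
  have hMm : (((1 - β) • (1 : Matrix (Fin n) (Fin n) ℝ) - δ • G)⁻¹) ^ 2
      = V * Matrix.diagonal lm * star V := by
    have := my_inv_sq G hG (1 - β) δ (fun i => by linarith [(hpos i).2])
    rw [this]
  set Db : Fin n → ℝ := fun i => (1 + ((k:ℝ) - 1) * β) * lp i - (1 - β) * lm i with hDb
  have hB : (1 + ((k:ℝ) - 1) * β) •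
        ((((1 + ((k:ℝ) - 1) * β) • (1 : Matrix (Fin n) (Fin n) ℝ) - δ • G)⁻¹) ^ 2) -
      (1 - β) • ((((1 - β) • (1 : Matrix (Fin n) (Fin n) ℝ) - δ • G)⁻¹) ^ 2)
      = V * Matrix.diagonal Db * star V := by
    rw [hMp, hMm]
    have hsmul : ∀ (a : ℝ) (D : Matrix (Fin n) (Fin n) ℝ),
        a • (V * D * star V) = V * (a • D) * star V := by
      intro a D; rw [← Matrix.smul_mul, ← Matrix.mul_smul]
    rw [hsmul, hsmul, ← Matrix.sub_mul, ← Matrix.mul_sub, ← diagonal_smul, ← diagonal_smul,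
      ← diagonal_sub]
    rfl
  -- the diagonal entries
  set d : Fin k × Fin n → ℝ := fun ji =>
    if ji.1 = 0 then
      (1 + ((k : ℝ) - 1) * β) / (2 * (1 + ((k : ℝ) - 1) * β - δ * μ ji.2) ^ 2)
    else (1 - β) / (2 * (1 - β - δ * μ ji.2) ^ 2) with hd
  set dk : Fin k → ℝ := fun j => if j = 0 then (k:ℝ) else 0 with hdk
  have hdval : d = fun ji => ((1 - β) / 2) * lm ji.2 + (1 / (2 * (k:ℝ))) * (dk ji.1 * Db ji.2) := by
    funext ji
    have h1 := hnep ji.2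
    have h2 := hnem ji.2
    by_cases h : ji.1 = 0
    · simp only [hd, hdk, hDb, hlp, hlm, h, if_pos rfl, ↓reduceIte]
      field_simp
      ring
    · simp only [hd, hdk, hDb, hlp, hlm, h, if_neg h]
      field_simp
      ring
  have hkron1 : (S ⊗ₖ V) * (T ⊗ₖ star V) = 1 := by
    rw [← Matrix.mul_kronecker_mul, hST, hV1, Matrix.one_kronecker_one]
  have hPeq : P = (S ⊗ₖ V) * Matrix.diagonal d * (T ⊗ₖ star V) := by
    have hmid : Matrix.diagonal d =
        ((1 - β) / 2) • ((1 : Matrix (Fin k) (Fin k) ℝ) ⊗ₖ Matrix.diagonal lm) +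
        (1 / (2 * (k:ℝ))) • (Matrix.diagonal dk ⊗ₖ Matrix.diagonal Db) := by
      rw [← diagonal_one, Matrix.diagonal_kronecker_diagonal, Matrix.diagonal_kronecker_diagonal,
        ← diagonal_smul, ← diagonal_smul, diagonal_add, hdval]
      congr 1
      funext ji
      simp [smul_eq_mul, one_mul]
    rw [hmid, Matrix.mul_add, Matrix.add_mul, Matrix.mul_smul, Matrix.mul_smul,
      Matrix.smul_mul, Matrix.smul_mul, ← Matrix.mul_kronecker_mul, ← Matrix.mul_kronecker_mul,
      ← Matrix.mul_kronecker_mul, ← Matrix.mul_kronecker_mul, hJdiag]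
    have hS1T : S * 1 * T = 1 := by rw [Matrix.mul_one, hST]
    rw [hS1T, hPdef, hB, hMm]
  -- compute the eigenvalue multiset
  rw [my_herm_roots P hP, hPeq, my_charpoly_conj _ _ _ hkron1, my_roots_charpoly_diagonal]
  -- multiset bookkeeping
  have huniv : (Finset.univ : Finset (Fin k × Fin n)).val =
      (Finset.univ : Finset (Fin k)).val.bind
        (fun j => (Finset.univ : Finset (Fin n)).val.map (Prod.mk j)) := by
    rw [← Finset.univ_product_univ, Finset.product_val]; rfl
  rw [huniv, Multiset.map_bind]
  set Mp : Multiset ℝ := Multiset.map (fun i : Fin n =>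
      (1 + ((k : ℝ) - 1) * β) / (2 * (1 + ((k : ℝ) - 1) * β - δ * μ i) ^ 2))
      Finset.univ.val with hMpm
  set Mm : Multiset ℝ := Multiset.map (fun i : Fin n =>
      (1 - β) / (2 * (1 - β - δ * μ i) ^ 2)) Finset.univ.val with hMmm
  have hin : ∀ j : Fin k, Multiset.map d ((Finset.univ : Finset (Fin n)).val.map (Prod.mk j))
      = if j = 0 then Mp else Mm := by
    intro j
    rw [Multiset.map_map]
    by_cases h : j = 0
    · rw [if_pos h, hMpm]
      congr 1
      funext i
      simp [hd, h]
    · rw [if_neg h, hMmm]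
      congr 1
      funext i
      simp [hd, h]
  have hbind : (Finset.univ : Finset (Fin k)).val.bind
      (fun j => Multiset.map d ((Finset.univ : Finset (Fin n)).val.map (Prod.mk j)))
      = ∑ j : Fin k, (if j = 0 then Mp else Mm) := by
    rw [Multiset.bind_congr (fun j _ => hin j)]
    rfl
  rw [hbind]
  rw [← Finset.add_sum_erase _ _ (Finset.mem_univ (0 : Fin k)), if_pos rfl]
  congr 1
  rw [Finset.sum_congr rfl (fun j hj => if_neg (Finset.ne_of_mem_erase hj)),
    Finset.sum_const, Finset.card_erase_of_mem (Finset.mem_univ _), Finset.card_univ,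
    Fintype.card_fin]
end

section
/- Let P be a real symmetric kn×kn positive-semidefinite matrix written in block form with blocks P^{L} consisting of the first ln rows (1 ≤ l ≤ k), and let â ∈ ℝ^{kn} with P·â ≠ 0. Define for C > 0: W*(l, C) = max over a ∈ ℝ^{kn} with a^s = â^s for s > l and ‖a − â‖² ≤ C of a^T P a, and Ŵ = â^T P â. Then lim_{C→0⁺} (W*(l, C) − Ŵ)/√C = 2·‖P^{L}·â‖. Consequently, if â^1 = â^2 = ⋯ = â^k (blockwise equal) and P has the block structure P = I_k ⊗ Y' + (J_k − I_k) ⊗ Z' with Y', Z' symmetric, then lim_{C→0⁺} (W*(l,C) − Ŵ)/(W*(k,C) − Ŵ) = √(l/k). -/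
open Matrix Kronecker

open Filter in
lemma aux_tendsto {ι : Type*} [Fintype ι] [DecidableEq ι]
    (P : Matrix ι ι ℝ) (hP : P.PosSemidef) (ahat : ι → ℝ)
    (pred : ι → Prop) [DecidablePred pred] (W : ℝ → ℝ)
    (hW : ∀ C, 0 < C → IsGreatest {y | ∃ a : ι → ℝ,
        (∀ i, ¬ pred i → a i = ahat i) ∧
        (a - ahat) ⬝ᵥ (a - ahat) ≤ C ∧ y = a ⬝ᵥ P.mulVec a} (W C)) :
    Tendsto (fun C => (W C - ahat ⬝ᵥ P.mulVec ahat) / Real.sqrt C)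
      (nhdsWithin 0 (Set.Ioi 0))
      (nhds (2 * Real.sqrt (∑ i, if pred i then (P.mulVec ahat i) ^ 2 else 0))) := by
  classical
  set What := ahat ⬝ᵥ P.mulVec ahat with hWhatdef
  set b := P.mulVec ahat with hbdef
  set bl : ι → ℝ := fun i => if pred i then b i else 0 with hbldef
  have hNsum : (∑ i, if pred i then (b i) ^ 2 else 0) = ∑ i, (bl i) ^ 2 := by
    refine Finset.sum_congr rfl fun i _ => ?_
    simp only [hbldef]; split <;> simp
  rw [hNsum]
  set N := ∑ i, (bl i) ^ 2 with hNdef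
  have hNnn : 0 ≤ N := Finset.sum_nonneg fun i _ => sq_nonneg _
  have hPT : ∀ i j, P i j = P j i := by
    intro i j
    have := hP.1
    rw [Matrix.IsHermitian] at this
    have h2 := congrFun (congrFun this j) i
    simpa [Matrix.conjTranspose_apply] using h2
  have hsymm : ∀ x y : ι → ℝ, x ⬝ᵥ P.mulVec y = y ⬝ᵥ P.mulVec x := by
    intro x y
    simp only [dotProduct, Matrix.mulVec, Finset.mul_sum]
    rw [Finset.sum_comm]
    refine Finset.sum_congr rfl fun i _ => Finset.sum_congr rfl fun j _ => ?_
    rw [hPT j i]; ring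
  have hexp : ∀ d : ι → ℝ,
      (ahat + d) ⬝ᵥ P.mulVec (ahat + d)
        = What + 2 * (d ⬝ᵥ b) + d ⬝ᵥ P.mulVec d := by
    intro d
    rw [Matrix.mulVec_add, add_dotProduct, dotProduct_add,
      dotProduct_add]
    have h2 : ahat ⬝ᵥ P.mulVec d = d ⬝ᵥ P.mulVec ahat := hsymm ahat d
    rw [h2, ← hbdef, ← hWhatdef]
    ring
  have hblbl : bl ⬝ᵥ bl = N := by
    rw [hNdef]
    exact Finset.sum_congr rfl fun i _ => (sq (bl i)).symm
  have hblb : bl ⬝ᵥ b = N := by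
    rw [hNdef]
    simp only [dotProduct]
    refine Finset.sum_congr rfl fun i _ => ?_
    simp only [hbldef]; split <;> [rw [sq]; simp]
  set M := ∑ i, ∑ j, |P i j| with hMdef
  -- lower bound
  have hlow : ∀ C : ℝ, 0 < C → What + 2 * (Real.sqrt C * Real.sqrt N) ≤ W C := by
    intro C hC
    rcases eq_or_lt_of_le hNnn with hN0 | hNpos
    · have hz : Real.sqrt N = 0 := by rw [← hN0, Real.sqrt_zero]
      rw [hz]
      have hmem : What ∈ {y | ∃ a : ι → ℝ,
          (∀ i, ¬ pred i → a i = ahat i) ∧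
          (a - ahat) ⬝ᵥ (a - ahat) ≤ C ∧ y = a ⬝ᵥ P.mulVec a} := by
        refine ⟨ahat, fun i _ => rfl, ?_, rfl⟩
        simp [dotProduct, hC.le]
      simpa using (hW C hC).2 hmem
    · set t := Real.sqrt C / Real.sqrt N with htdef
      have hsN : 0 < Real.sqrt N := Real.sqrt_pos.2 hNpos
      have hsC : 0 < Real.sqrt C := Real.sqrt_pos.2 hC
      have hssN : Real.sqrt N * Real.sqrt N = N := Real.mul_self_sqrt hNnn
      have hssC : Real.sqrt C * Real.sqrt C = C := Real.mul_self_sqrt hC.le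
      have htN : t * N = Real.sqrt C * Real.sqrt N := by
        rw [htdef, div_mul_eq_mul_div, div_eq_iff hsN.ne']
        linear_combination (- Real.sqrt C) * hssN
      have ht2N : t * (t * N) = C := by
        rw [htN, htdef, div_mul_eq_mul_div, div_eq_iff hsN.ne']
        linear_combination Real.sqrt N * hssC
      have hmem : ((ahat + t • bl) ⬝ᵥ P.mulVec (ahat + t • bl)) ∈ {y | ∃ a : ι → ℝ,
          (∀ i, ¬ pred i → a i = ahat i) ∧
          (a - ahat) ⬝ᵥ (a - ahat) ≤ C ∧ y = a ⬝ᵥ P.mulVec a} := by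
        refine ⟨ahat + t • bl, ?_, ?_, rfl⟩
        · intro i hi
          simp [hbldef, if_neg hi]
        · have hsub : (ahat + t • bl) - ahat = t • bl := by
            funext i; simp
          rw [hsub, smul_dotProduct, dotProduct_smul, hblbl,
            smul_eq_mul, smul_eq_mul, ht2N]
      have hval : What + 2 * (Real.sqrt C * Real.sqrt N)
          ≤ (ahat + t • bl) ⬝ᵥ P.mulVec (ahat + t • bl) := by
        rw [hexp (t • bl), smul_dotProduct, smul_eq_mul, hblb, htN]
        have hq : 0 ≤ (t • bl) ⬝ᵥ P.mulVec (t • bl) := by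
          have := hP.dotProduct_mulVec_nonneg (t • bl)
          simpa using this
        linarith
      exact hval.trans ((hW C hC).2 hmem)
  -- upper bound
  have hup : ∀ C : ℝ, 0 < C → W C ≤ What + 2 * (Real.sqrt C * Real.sqrt N) + M * C := by
    intro C hC
    obtain ⟨a, hfix, hle, hval⟩ := (hW C hC).1
    set d : ι → ℝ := a - ahat with hddef
    have ha : a = ahat + d := by funext i; simp [hddef]
    have hdd : d ⬝ᵥ d ≤ C := hle
    have hddsq : ∑ i, (d i) ^ 2 ≤ C := by
      refine le_trans (le_of_eq ?_) hdd
      exact Finset.sum_congr rfl fun i _ => sq (d i)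
    have hdsq : ∀ i, (d i) ^ 2 ≤ C := by
      intro i
      refine le_trans ?_ hddsq
      exact Finset.single_le_sum (fun j _ => sq_nonneg (d j)) (Finset.mem_univ i)
    have hd0 : ∀ i, ¬ pred i → d i = 0 := by
      intro i hi; simp [hddef, hfix i hi]
    have hdb : d ⬝ᵥ b ≤ Real.sqrt C * Real.sqrt N := by
      have h1 : d ⬝ᵥ b = ∑ i, d i * bl i := by
        simp only [dotProduct]
        refine Finset.sum_congr rfl fun i _ => ?_
        simp only [hbldef]
        split
        · rfl
        · rw [hd0 i (by assumption)]; simp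
      rw [h1]
      calc ∑ i, d i * bl i
          ≤ Real.sqrt (∑ i, (d i) ^ 2) * Real.sqrt (∑ i, (bl i) ^ 2) :=
            Real.sum_mul_le_sqrt_mul_sqrt _ _ _
        _ ≤ Real.sqrt C * Real.sqrt N := by
            have h := Real.sqrt_le_sqrt hddsq
            exact mul_le_mul_of_nonneg_right h (Real.sqrt_nonneg _)
    have hdPd : d ⬝ᵥ P.mulVec d ≤ M * C := by
      have h1 : d ⬝ᵥ P.mulVec d = ∑ i, ∑ j, d i * (P i j * d j) := by
        simp only [dotProduct, Matrix.mulVec, Finset.mul_sum]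
      rw [h1, hMdef, Finset.sum_mul]
      refine Finset.sum_le_sum fun i _ => ?_
      rw [Finset.sum_mul]
      refine Finset.sum_le_sum fun j _ => ?_
      have h2 := hdsq i
      have h3 := hdsq j
      have h4 : P i j ≤ |P i j| := le_abs_self _
      have h5 : -|P i j| ≤ P i j := neg_abs_le _
      nlinarith [sq_nonneg (d i + d j), sq_nonneg (d i - d j), abs_nonneg (P i j)]
    have := hexp d
    rw [← ha] at this
    rw [hval, this]
    linarith
  -- squeeze
  have hsqrt0 : Tendsto (fun C : ℝ => Real.sqrt C) (nhdsWithin 0 (Set.Ioi 0)) (nhds 0) :=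
    (Real.continuous_sqrt.tendsto' 0 0 Real.sqrt_zero).mono_left nhdsWithin_le_nhds
  refine tendsto_of_tendsto_of_tendsto_of_le_of_le'
    (g := fun _ : ℝ => 2 * Real.sqrt N)
    (h := fun C => 2 * Real.sqrt N + Real.sqrt C * M) tendsto_const_nhds ?_ ?_ ?_
  · have : Tendsto (fun C : ℝ => 2 * Real.sqrt N + Real.sqrt C * M)
        (nhdsWithin 0 (Set.Ioi 0)) (nhds (2 * Real.sqrt N + 0 * M)) :=
      tendsto_const_nhds.add (hsqrt0.mul tendsto_const_nhds)
    simpa using this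
  · filter_upwards [self_mem_nhdsWithin] with C hC
    have hC : (0:ℝ) < C := hC
    have hsC : 0 < Real.sqrt C := Real.sqrt_pos.2 hC
    rw [le_div_iff₀ hsC]
    have := hlow C hC
    nlinarith
  · filter_upwards [self_mem_nhdsWithin] with C hC
    have hC : (0:ℝ) < C := hC
    have hsC : 0 < Real.sqrt C := Real.sqrt_pos.2 hC
    have hssC : Real.sqrt C * Real.sqrt C = C := Real.mul_self_sqrt hC.le
    rw [div_le_iff₀ hsC]
    have h1 := hup C hC
    have h2 : (2 * Real.sqrt N + Real.sqrt C * M) * Real.sqrt C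
        = 2 * (Real.sqrt C * Real.sqrt N) + M * C := by
      linear_combination M * hssC
    linarith

/-- Small-budget rate of the partial-intervention welfare:
`(W*(l,C) − Ŵ)/√C → 2‖P^L â‖` as `C → 0⁺`, and, when the blocks of `â` are equal
and `P = I_k ⊗ Y' + (J_k − I_k) ⊗ Z'`, the ratio
`(W*(l,C) − Ŵ)/(W*(k,C) − Ŵ) → √(l/k)`. -/
theorem stmt_19 {n : ℕ} (k : ℕ) (hk : 1 ≤ k)
    (P : Matrix (Fin k × Fin n) (Fin k × Fin n) ℝ) (hP : P.PosSemidef)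
    (ahat : Fin k × Fin n → ℝ) (hPa : P.mulVec ahat ≠ 0)
    (Wstar : ℕ → ℝ → ℝ)
    (hW : ∀ l C, 1 ≤ l → l ≤ k → 0 < C →
      IsGreatest {y | ∃ a : Fin k × Fin n → ℝ,
        (∀ pr : Fin k × Fin n, l ≤ (pr.1 : ℕ) → a pr = ahat pr) ∧
        (a - ahat) ⬝ᵥ (a - ahat) ≤ C ∧ y = a ⬝ᵥ P.mulVec a} (Wstar l C)) :
    (∀ l, 1 ≤ l → l ≤ k →
      Filter.Tendsto (fun C => (Wstar l C - ahat ⬝ᵥ P.mulVec ahat) / Real.sqrt C)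
        (nhdsWithin 0 (Set.Ioi 0))
        (nhds (2 * Real.sqrt (∑ pr : Fin k × Fin n,
          if (pr.1 : ℕ) < l then (P.mulVec ahat pr) ^ 2 else 0)))) ∧
    ((∀ s t : Fin k, ∀ i : Fin n, ahat (s, i) = ahat (t, i)) →
      ∀ Y Z : Matrix (Fin n) (Fin n) ℝ, Y.IsSymm → Z.IsSymm →
      P = (1 : Matrix (Fin k) (Fin k) ℝ) ⊗ₖ Y +
        ((Matrix.of fun _ _ => (1 : ℝ)) - (1 : Matrix (Fin k) (Fin k) ℝ)) ⊗ₖ Z →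
      ∀ l, 1 ≤ l → l ≤ k →
      Filter.Tendsto (fun C =>
          (Wstar l C - ahat ⬝ᵥ P.mulVec ahat) / (Wstar k C - ahat ⬝ᵥ P.mulVec ahat))
        (nhdsWithin 0 (Set.Ioi 0)) (nhds (Real.sqrt ((l : ℝ) / (k : ℝ))))) := by
  classical
  have part1 : ∀ l, 1 ≤ l → l ≤ k →
      Filter.Tendsto (fun C => (Wstar l C - ahat ⬝ᵥ P.mulVec ahat) / Real.sqrt C)
        (nhdsWithin 0 (Set.Ioi 0))
        (nhds (2 * Real.sqrt (∑ pr : Fin k × Fin n,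
          if (pr.1 : ℕ) < l then (P.mulVec ahat pr) ^ 2 else 0))) := by
    intro l hl1 hlk
    refine aux_tendsto P hP ahat (fun pr => (pr.1 : ℕ) < l) (Wstar l) ?_
    intro C hC
    have hset : {y | ∃ a : Fin k × Fin n → ℝ,
        (∀ i : Fin k × Fin n, ¬ ((i.1 : ℕ) < l) → a i = ahat i) ∧
        (a - ahat) ⬝ᵥ (a - ahat) ≤ C ∧ y = a ⬝ᵥ P.mulVec a}
      = {y | ∃ a : Fin k × Fin n → ℝ,
        (∀ pr : Fin k × Fin n, l ≤ (pr.1 : ℕ) → a pr = ahat pr) ∧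
        (a - ahat) ⬝ᵥ (a - ahat) ≤ C ∧ y = a ⬝ᵥ P.mulVec a} := by
      ext y; simp only [Set.mem_setOf_eq, not_lt]
    rw [hset]
    exact hW l C hl1 hlk hC
  refine ⟨part1, ?_⟩
  intro heq Y Z hY hZ hPeq l hl1 hlk
  set b := P.mulVec ahat with hbdef
  set s0 : Fin k := ⟨0, hk⟩ with hs0
  have key : ∀ s : Fin k, ∀ i : Fin n,
      b (s, i) = ∑ j, (Y i j + ((k : ℝ) - 1) * Z i j) * ahat (s0, j) := by
    intro s i
    have h0 : b (s, i) = ∑ t : Fin k, ∑ j : Fin n, P (s, i) (t, j) * ahat (t, j) := by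
      rw [hbdef]
      simp [Matrix.mulVec, dotProduct, Fintype.sum_prod_type]
    rw [h0]
    calc ∑ t : Fin k, ∑ j : Fin n, P (s, i) (t, j) * ahat (t, j)
        = ∑ j : Fin n, (∑ t : Fin k, P (s, i) (t, j)) * ahat (s0, j) := by
          rw [Finset.sum_comm]
          refine Finset.sum_congr rfl fun j _ => ?_
          rw [Finset.sum_mul]
          exact Finset.sum_congr rfl fun t _ => by rw [heq t s0 j]
      _ = ∑ j, (Y i j + ((k : ℝ) - 1) * Z i j) * ahat (s0, j) := by
          refine Finset.sum_congr rfl fun j _ => ?_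
          congr 1
          rw [hPeq]
          simp only [Matrix.add_apply, Matrix.kroneckerMap_apply, Matrix.one_apply,
            Matrix.sub_apply, Matrix.of_apply, Finset.sum_add_distrib, sub_mul, one_mul,
            Finset.sum_sub_distrib, Finset.sum_ite_eq, Finset.mem_univ, if_pos,
            Finset.sum_const, Finset.card_univ, Fintype.card_fin, nsmul_eq_mul,
            ite_mul, zero_mul]
  have hconst : ∀ s t : Fin k, ∀ i : Fin n, b (s, i) = b (t, i) := by
    intro s t i; rw [key s i, key t i]
  set S := ∑ i : Fin n, (b (s0, i)) ^ 2 with hSdef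
  have hNl : ∀ l' : ℕ, l' ≤ k →
      (∑ pr : Fin k × Fin n, if (pr.1 : ℕ) < l' then (b pr) ^ 2 else 0) = (l' : ℝ) * S := by
    intro l' hl'
    rw [Fintype.sum_prod_type]
    have h1 : ∀ s : Fin k,
        (∑ i : Fin n, if ((s : ℕ) < l') then (b (s, i)) ^ 2 else 0)
          = if ((s : ℕ) < l') then S else 0 := by
      intro s
      by_cases h : (s : ℕ) < l'
      · simp only [if_pos h, hSdef]
        exact Finset.sum_congr rfl fun i _ => by rw [hconst s s0 i]
      · simp [if_neg h]
    rw [Finset.sum_congr rfl fun s _ => h1 s]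
    rw [Fin.sum_univ_eq_sum_range (fun m => if m < l' then S else 0) k]
    rw [← Finset.sum_filter]
    have h2 : (Finset.range k).filter (fun m => m < l') = Finset.range l' := by
      ext m; simp only [Finset.mem_filter, Finset.mem_range]; omega
    rw [h2, Finset.sum_const, Finset.card_range, nsmul_eq_mul]
  have hSpos : 0 < S := by
    rcases lt_or_eq_of_le (Finset.sum_nonneg fun i _ => sq_nonneg (b (s0, i)) : 0 ≤ S)
      with h | h
    · exact h
    · exfalso
      apply hPa
      funext pr
      obtain ⟨t, i⟩ := pr
      have hbi : b (s0, i) = 0 := by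
        have := (Finset.sum_eq_zero_iff_of_nonneg
          (fun i _ => sq_nonneg (b (s0, i)))).1 h.symm i (Finset.mem_univ i)
        exact pow_eq_zero_iff (two_ne_zero) |>.1 this
      show b (t, i) = 0
      rw [hconst t s0 i, hbi]
  have hlL := part1 l hl1 hlk
  have hkL := part1 k hk le_rfl
  rw [hNl l hlk] at hlL
  rw [hNl k le_rfl] at hkL
  have hkS : (0 : ℝ) < (k : ℝ) * S := by
    have : (0 : ℝ) < (k : ℝ) := by exact_mod_cast lt_of_lt_of_le zero_lt_one hk
    exact mul_pos this hSpos
  have hden : (0 : ℝ) < 2 * Real.sqrt ((k : ℝ) * S) :=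
    mul_pos two_pos (Real.sqrt_pos.2 hkS)
  have hdiv := hlL.div hkL (ne_of_gt hden)
  have hval : (2 * Real.sqrt ((l : ℝ) * S)) / (2 * Real.sqrt ((k : ℝ) * S))
      = Real.sqrt ((l : ℝ) / (k : ℝ)) := by
    rw [mul_div_mul_left _ _ (two_ne_zero)]
    rw [← Real.sqrt_div (by positivity)]
    congr 1
    rw [mul_div_mul_right _ _ (ne_of_gt hSpos)]
  rw [hval] at hdiv
  refine Filter.Tendsto.congr' ?_ hdiv
  filter_upwards [self_mem_nhdsWithin] with C hC
  have hC : (0 : ℝ) < C := hC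
  have hsC : Real.sqrt C ≠ 0 := ne_of_gt (Real.sqrt_pos.2 hC)
  exact div_div_div_cancel_right₀ hsC _ _
end
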